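/- arXiv:2504.15864 — 3 statements merged into one kernel-verified Lean document; each statement's English description precedes it below -/
import Mathlib

section
/- Let Q₃ : ℝ^{3×3} → ℝ be a quadratic form (i.e. Q₃(F) = B(F,F) for a symmetric bilinear form B) such that Q₃(F) = Q₃(sym F) for all F and Q₃ is positive definite on symmetric matrices. Then for every π ∈ ℝ and every symmetric G ∈ ℝ^{2×2}, the infima defining Q₂(G) := inf_{a∈ℝ³} Q₃(ι(G) + a⊗e₃) and Q₂^π(G) := inf_{a∈ℝ³} { Q₃(ι(G) + a⊗e₃) + 2π a₃ } are attained, and there exist a linear map ℒ from symmetric 2×2 matrices to ℝ and a constant κ ∈ ℝ, both depending only on Q₃ (not on π or G), such that Q₂^π(G) = Q₂(G) + π ℒ(G) + π² κ for all symmetric G ∈ ℝ^{2×2} and all π ∈ ℝ. -/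
noncomputable section

/-- Embedding of a `2 × 2` matrix into `3 × 3` matrices (upper-left block). -/
def iota (G : Matrix (Fin 2) (Fin 2) ℝ) : Matrix (Fin 3) (Fin 3) ℝ :=
  Matrix.of fun i j =>
    if hi : (i : ℕ) < 2 then
      if hj : (j : ℕ) < 2 then G ⟨(i : ℕ), hi⟩ ⟨(j : ℕ), hj⟩ else 0
    else 0

/-- The matrix `a ⊗ e₃`, whose third column is `a` and whose other columns vanish. -/
def col3 (a : Fin 3 → ℝ) : Matrix (Fin 3) (Fin 3) ℝ :=
  Matrix.of fun i j => if j = 2 then a i else 0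

/-- `Q₂(G) = inf_{a ∈ ℝ³} Q₃(ι(G) + a ⊗ e₃)`. -/
def Q2 (Q₃ : Matrix (Fin 3) (Fin 3) ℝ → ℝ) (G : Matrix (Fin 2) (Fin 2) ℝ) : ℝ :=
  sInf (Set.range fun a : Fin 3 → ℝ => Q₃ (iota G + col3 a))

/-- `Q₂^π(G) = inf_{a ∈ ℝ³} { Q₃(ι(G) + a ⊗ e₃) + 2 π a₃ }`. -/
def Q2pi (Q₃ : Matrix (Fin 3) (Fin 3) ℝ → ℝ) (π : ℝ) (G : Matrix (Fin 2) (Fin 2) ℝ) : ℝ :=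
  sInf (Set.range fun a : Fin 3 → ℝ => Q₃ (iota G + col3 a) + 2 * π * a 2)

def iotaL : Matrix (Fin 2) (Fin 2) ℝ →ₗ[ℝ] Matrix (Fin 3) (Fin 3) ℝ where
  toFun := iota
  map_add' G H := by
    ext i j
    simp only [iota, Matrix.of_apply, Matrix.add_apply]
    split <;> [skip; simp] <;> split <;> simp [Matrix.add_apply]
  map_smul' c G := by
    ext i j
    simp only [iota, Matrix.of_apply, Matrix.smul_apply, RingHom.id_apply]
    split <;> [skip; simp] <;> split <;> simp [Matrix.smul_apply]

def col3L : (Fin 3 → ℝ) →ₗ[ℝ] Matrix (Fin 3) (Fin 3) ℝ where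
  toFun := col3
  map_add' a b := by
    ext i j
    simp only [col3, Matrix.of_apply, Matrix.add_apply, Pi.add_apply]
    split <;> simp
  map_smul' c a := by
    ext i j
    simp only [col3, Matrix.of_apply, Matrix.smul_apply, Pi.smul_apply, RingHom.id_apply]
    split <;> simp


/-- For a quadratic form `Q₃` with `Q₃ = Q₃ ∘ sym`, positive definite on symmetric matrices,
the infima defining `Q₂` and `Q₂^π` are attained, and `Q₂^π(G) = Q₂(G) + π ℒ(G) + π² κ` for a
linear map `ℒ` and a constant `κ` depending only on `Q₃`. -/
theorem stmt1 (Q₃ : Matrix (Fin 3) (Fin 3) ℝ → ℝ)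
    (B : Matrix (Fin 3) (Fin 3) ℝ →ₗ[ℝ] Matrix (Fin 3) (Fin 3) ℝ →ₗ[ℝ] ℝ)
    (hBsymm : ∀ F G : Matrix (Fin 3) (Fin 3) ℝ, B F G = B G F)
    (hQB : ∀ F : Matrix (Fin 3) (Fin 3) ℝ, Q₃ F = B F F)
    (hQsym : ∀ F : Matrix (Fin 3) (Fin 3) ℝ, Q₃ F = Q₃ ((1 / 2 : ℝ) • (F + F.transpose)))
    (hQpos : ∀ F : Matrix (Fin 3) (Fin 3) ℝ, F.transpose = F → F ≠ 0 → 0 < Q₃ F) :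
    (∀ (π : ℝ) (G : Matrix (Fin 2) (Fin 2) ℝ), G.transpose = G →
      (∃ a : Fin 3 → ℝ, IsLeast
        (Set.range fun b : Fin 3 → ℝ => Q₃ (iota G + col3 b))
        (Q₃ (iota G + col3 a))) ∧
      (∃ a : Fin 3 → ℝ, IsLeast
        (Set.range fun b : Fin 3 → ℝ => Q₃ (iota G + col3 b) + 2 * π * b 2)
        (Q₃ (iota G + col3 a) + 2 * π * a 2))) ∧
    (∃ (L : Matrix (Fin 2) (Fin 2) ℝ →ₗ[ℝ] ℝ) (κ : ℝ),
      ∀ (π : ℝ) (G : Matrix (Fin 2) (Fin 2) ℝ), G.transpose = G →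
        Q2pi Q₃ π G = Q2 Q₃ G + π * L G + π ^ 2 * κ) := by
  -- the bilinear form b x y = B (col3 x) (col3 y)
  set b : LinearMap.BilinForm ℝ (Fin 3 → ℝ) := B.compl₁₂ col3L col3L with hbdef
  have hbapp : ∀ x y, b x y = B (col3 x) (col3 y) := fun x y => rfl
  have hbsymm : ∀ x y, b x y = b y x := fun x y => hBsymm _ _
  have hbpos : ∀ x : Fin 3 → ℝ, x ≠ 0 → 0 < b x x := by
    intro x hx
    have h1 : b x x = Q₃ (col3 x) := (hQB _).symm
    rw [h1, hQsym]
    apply hQpos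
    · ext i j
      simp only [Matrix.transpose_apply, Matrix.smul_apply, Matrix.add_apply]
      ring
    · intro h0
      apply hx
      have h2 : ∀ i : Fin 3, ((1 / 2 : ℝ) • (col3 x + (col3 x).transpose)) i 2 = 0 := by
        intro i; rw [h0]; simp
      have e0 := h2 0
      have e1 := h2 1
      have e2 := h2 2
      simp only [Matrix.smul_apply, Matrix.add_apply, Matrix.transpose_apply, col3,
        Matrix.of_apply, smul_eq_mul] at e0 e1 e2
      rw [if_neg (by decide : (0 : Fin 3) ≠ 2)] at e0
      rw [if_neg (by decide : (1 : Fin 3) ≠ 2)] at e1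
      norm_num at e0 e1 e2
      funext i
      fin_cases i <;> simp <;> linarith
  have hbnd : b.Nondegenerate := by
    constructor <;> intro x hx
    all_goals (by_contra hx0; exact absurd (hx x) (ne_of_gt (hbpos x hx0)))
  -- solving b a · = φ
  have sol : ∀ φ : (Fin 3 → ℝ) →ₗ[ℝ] ℝ, ∃ a : Fin 3 → ℝ, ∀ h, b a h = φ h := by
    intro φ
    exact ⟨(b.toDual hbnd).symm φ,
      fun h => LinearMap.BilinForm.apply_toDual_symm_apply (B := b) (hB := hbnd) φ h⟩
  -- the linear functional for given π G
  have hexpand : ∀ (G : Matrix (Fin 2) (Fin 2) ℝ) (x : Fin 3 → ℝ),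
      Q₃ (iota G + col3 x) = B (iota G) (iota G) + 2 * B (iota G) (col3 x) + b x x := by
    intro G x
    rw [hQB]
    simp only [map_add, LinearMap.add_apply, hbapp]
    rw [hBsymm (col3 x) (iota G)]
    ring
  -- minimizers
  have key : ∀ (π : ℝ) (G : Matrix (Fin 2) (Fin 2) ℝ),
      ∃ a : Fin 3 → ℝ, ∀ h : Fin 3 → ℝ, b a h = -(B (iota G) (col3 h) + π * h 2) := by
    intro π G
    obtain ⟨a, ha⟩ := sol (-(((B (iota G)).comp col3L) + π • (LinearMap.proj 2)))
    refine ⟨a, fun h => ?_⟩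
    have := ha h
    simp [smul_eq_mul] at this ⊢; exact this
  have least : ∀ (π : ℝ) (G : Matrix (Fin 2) (Fin 2) ℝ) (a : Fin 3 → ℝ),
      (∀ h : Fin 3 → ℝ, b a h = -(B (iota G) (col3 h) + π * h 2)) →
      IsLeast (Set.range fun x : Fin 3 → ℝ => Q₃ (iota G + col3 x) + 2 * π * x 2)
        (Q₃ (iota G + col3 a) + 2 * π * a 2) := by
    intro π G a ha
    constructor
    · exact ⟨a, rfl⟩
    · rintro y ⟨x, rfl⟩
      dsimp only
      rw [hexpand G x, hexpand G a]
      have hb1 : b x x = b a a + 2 * b a (x - a) + b (x - a) (x - a) := by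
        have : x = a + (x - a) := by ring
        rw [this]
        simp only [map_add, LinearMap.add_apply]
        rw [hbsymm (x - a) a]; ring
      have hba := ha (x - a)
      have hpos : 0 ≤ b (x - a) (x - a) := by
        rcases eq_or_ne (x - a) 0 with h | h
        · simp [h]
        · exact le_of_lt (hbpos _ h)
      have hlin : B (iota G) (col3 x) = B (iota G) (col3 a) + B (iota G) (col3 (x - a)) := by
        have : col3 x = col3 a + col3 (x - a) := by
          have h := col3L.map_add a (x - a)
          rw [add_sub_cancel] at h
          exact h
        rw [this, map_add]
      have h2 : (x 2 : ℝ) = a 2 + (x - a) 2 := by simp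
      rw [hb1, hlin, h2]
      nlinarith [hba, hpos]
  -- value formula at minimizer
  have valf : ∀ (π : ℝ) (G : Matrix (Fin 2) (Fin 2) ℝ) (a : Fin 3 → ℝ),
      (∀ h : Fin 3 → ℝ, b a h = -(B (iota G) (col3 h) + π * h 2)) →
      Q₃ (iota G + col3 a) + 2 * π * a 2 = B (iota G) (iota G) - b a a := by
    intro π G a ha
    rw [hexpand]
    have := ha a
    nlinarith [ha a]
  -- d solves b d h = -h 2
  obtain ⟨d, hd⟩ := sol (-(LinearMap.proj 2 : (Fin 3 → ℝ) →ₗ[ℝ] ℝ))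
  simp only [LinearMap.neg_apply, LinearMap.proj_apply] at hd
  constructor
  · intro π G _
    constructor
    · obtain ⟨a, ha⟩ := key 0 G
      have h := least 0 G a ha
      refine ⟨a, ?_⟩
      simpa using h
    · obtain ⟨a, ha⟩ := key π G
      exact ⟨a, least π G a ha⟩
  · refine ⟨(2 : ℝ) • ((B.flip (col3L d)).comp iotaL), -(b d d), fun π G _ => ?_⟩
    obtain ⟨a, ha⟩ := key 0 G
    -- minimizer for π is a + π • d
    have hapi : ∀ h : Fin 3 → ℝ, b (a + π • d) h = -(B (iota G) (col3 h) + π * h 2) := by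
      intro h
      simp only [map_add, map_smul, LinearMap.add_apply, LinearMap.smul_apply, smul_eq_mul]
      rw [hd h]
      have := ha h
      simp only [mul_zero, zero_mul, add_zero, zero_add] at this
      rw [this]; ring
    have e1 : Q2pi Q₃ π G = B (iota G) (iota G) - b (a + π • d) (a + π • d) := by
      rw [Q2pi, (least π G _ hapi).csInf_eq, valf π G _ hapi]
    have e2 : Q2 Q₃ G = B (iota G) (iota G) - b a a := by
      have h := least 0 G a ha
      simp only [mul_zero, zero_mul, add_zero] at h
      rw [Q2, h.csInf_eq]
      have := valf 0 G a ha
      simp only [mul_zero, zero_mul, add_zero] at this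
      exact this
    rw [e1, e2]
    have hex : b (a + π • d) (a + π • d)
        = b a a + 2 * π * b a d + π ^ 2 * b d d := by
      simp only [map_add, map_smul, LinearMap.add_apply, LinearMap.smul_apply, smul_eq_mul]
      rw [hbsymm d a]; ring
    have had : b a d = -B (iota G) (col3 d) := by
      have := ha d
      simpa using this
    have hLG : ((2 : ℝ) • ((B.flip (col3L d)).comp iotaL)) G = 2 * B (iota G) (col3 d) := by
      simp only [LinearMap.smul_apply, LinearMap.comp_apply, LinearMap.flip_apply, smul_eq_mul]
      rfl
    rw [hex, had, hLG]
    ring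
end
end

section
/- Let Ω ⊆ ℝ³ be a measurable set of finite measure, let c > 0, π > 0, α ≥ 1, C ≥ 0, and let W : ℝ^{3×3} → [0, +∞] be a Borel function satisfying W(F) ≥ c(det F − 1)² for every F with |det F − 1| ≤ 1. Then there exists a constant C' ≥ 0, depending only on c, π, C and the measure of Ω, such that: for every h ∈ (0,1] and every measurable M : Ω → ℝ^{3×3} with W∘M integrable, det∘M − 1 integrable, det M(x) > 0 for a.e. x ∈ Ω, and ∫_Ω W(M(x)) dx + h^α π ∫_Ω (det M(x) − 1) dx ≤ C h^{2α}, one has ∫_Ω W(M(x)) dx ≤ C' h^{2α} and ∫_{{x ∈ Ω : |det M(x) − 1| ≤ 1}} (det M(x) − 1)² dx ≤ C' h^{2α}. -/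
open MeasureTheory
open scoped ENNReal

noncomputable section

/-- Matrices are measurably a `Pi` type. -/
instance : MeasurableSpace (Matrix (Fin 3) (Fin 3) ℝ) :=
  (inferInstance : MeasurableSpace (Fin 3 → Fin 3 → ℝ))

instance : BorelSpace (Matrix (Fin 3) (Fin 3) ℝ) :=
  (inferInstance : BorelSpace (Fin 3 → Fin 3 → ℝ))

private lemma arith0 {E X I2 Ch2 dh2 c : ℝ} (hc : 0 < c)
    (hEb : E ≤ Ch2 + X) (hch : X ≤ c / 2 * I2 + dh2) (hcI : c * I2 ≤ E) :
    E ≤ 2 * Ch2 + 2 * dh2 := by linarith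

private lemma arith1 {c K h2 E : ℝ} (hc : 0 < c) (hK0 : 0 ≤ K) (hh2 : 0 < h2)
    (hE : E ≤ K * h2) : E ≤ K * (1 + 1 / c) * h2 := by
  have h1 : 0 ≤ K * (1 / c) * h2 := by positivity
  nlinarith

private lemma arith2 {c K h2 E I2 : ℝ} (hc : 0 < c) (hK0 : 0 ≤ K) (hh2 : 0 < h2)
    (hE : E ≤ K * h2) (hcI : c * I2 ≤ E) : I2 ≤ K * (1 + 1 / c) * h2 := by
  have h0 : I2 ≤ K * h2 / c := (le_div_iff₀ hc).mpr (by linarith [mul_comm c I2])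
  have h1 : K * h2 / c = K * (1 / c) * h2 := by ring
  have h2' : 0 ≤ K * h2 := by positivity
  nlinarith

/-- Compactness bound in the presence of a positive pressure, under the orientation-preserving
assumption: small energy forces smallness of the elastic energy and of the `L²` norm of
`det − 1` on the set where `|det − 1| ≤ 1`. -/
theorem stmt5 (Ω : Set (Fin 3 → ℝ)) (hΩmeas : MeasurableSet Ω) (hΩfin : volume Ω < ⊤)
    (c π α C : ℝ) (hc : 0 < c) (hπ : 0 < π) (hα : 1 ≤ α) (hC : 0 ≤ C)
    (W : Matrix (Fin 3) (Fin 3) ℝ → ℝ≥0∞) (hWmeas : Measurable W)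
    (hW : ∀ F : Matrix (Fin 3) (Fin 3) ℝ, |F.det - 1| ≤ 1 →
      ENNReal.ofReal (c * (F.det - 1) ^ 2) ≤ W F) :
    ∃ C' : ℝ, 0 ≤ C' ∧
      ∀ h : ℝ, h ∈ Set.Ioc (0 : ℝ) 1 →
      ∀ M : (Fin 3 → ℝ) → Matrix (Fin 3) (Fin 3) ℝ, Measurable M →
        (∫⁻ x in Ω, W (M x) ∂volume) ≠ ⊤ →
        IntegrableOn (fun x => (M x).det - 1) Ω volume →
        (∀ᵐ x ∂(volume.restrict Ω), 0 < (M x).det) →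
        (∫⁻ x in Ω, W (M x) ∂volume).toReal
            + h ^ α * π * (∫ x in Ω, ((M x).det - 1) ∂volume) ≤ C * h ^ (2 * α) →
        (∫⁻ x in Ω, W (M x) ∂volume).toReal ≤ C' * h ^ (2 * α) ∧
        (∫ x in Ω ∩ {x | |(M x).det - 1| ≤ 1}, ((M x).det - 1) ^ 2 ∂volume)
          ≤ C' * h ^ (2 * α) := by
  have hdetc : Continuous (Matrix.det : Matrix (Fin 3) (Fin 3) ℝ → ℝ) := by
    show Continuous fun A : Matrix (Fin 3) (Fin 3) ℝ => Matrix.det A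
    simp only [Matrix.det_apply']
    exact continuous_finset_sum _ fun σ _ => continuous_const.mul
      (continuous_finset_prod _ fun i _ =>
        (continuous_apply i).comp (continuous_apply (σ i)))
  set μΩ := (volume Ω).toReal with hμΩdef
  have hμΩ0 : 0 ≤ μΩ := ENNReal.toReal_nonneg
  set K : ℝ := 2 * C + 2 * (π ^ 2 / (2 * c)) * μΩ with hKdef
  have hK0 : 0 ≤ K := by positivity
  refine ⟨K * (1 + 1 / c), by positivity, ?_⟩
  intro h hh M hMmeas hWfin hfint hdet hEn
  obtain ⟨h0, h1⟩ := hh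
  set E := (∫⁻ x in Ω, W (M x) ∂volume).toReal with hEdef
  have hE0 : 0 ≤ E := ENNReal.toReal_nonneg
  set f : (Fin 3 → ℝ) → ℝ := fun x => (M x).det - 1 with hfdef
  have hfmeas : Measurable f := (hdetc.measurable.comp hMmeas).sub measurable_const
  set t : Set (Fin 3 → ℝ) := {x | |f x| ≤ 1} with htdef
  have htmeas : MeasurableSet t := measurableSet_le hfmeas.abs measurable_const
  have hpα : 0 < h ^ α := Real.rpow_pos_of_pos h0 α
  have hp2 : h ^ (2 * α) = h ^ α * h ^ α := by
    rw [two_mul, Real.rpow_add h0]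
  have hp2pos : 0 < h ^ (2 * α) := by rw [hp2]; positivity
  -- integrabilities on A := Ω ∩ t
  have hfA : IntegrableOn f (Ω ∩ t) volume := hfint.mono_set Set.inter_subset_left
  have haeA : ∀ᵐ x ∂(volume.restrict (Ω ∩ t)), x ∈ Ω ∩ t :=
    ae_restrict_mem (hΩmeas.inter htmeas)
  have hsqA : IntegrableOn (fun x => (f x) ^ 2) (Ω ∩ t) volume := by
    refine hfA.abs.mono' ((hfmeas.pow_const 2).aestronglyMeasurable) ?_
    filter_upwards [haeA] with x hx
    have h1 : |f x| ≤ 1 := hx.2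
    have : ‖f x ^ 2‖ = |f x| * |f x| := by
      rw [Real.norm_eq_abs, sq, abs_mul]
    rw [this]
    nlinarith [abs_nonneg (f x)]
  have hI2 : 0 ≤ ∫ x in Ω ∩ t, (f x) ^ 2 ∂volume :=
    integral_nonneg fun x => sq_nonneg _
  -- step (c): c * ∫_A f² ≤ E
  have hcI2 : c * ∫ x in Ω ∩ t, (f x) ^ 2 ∂volume ≤ E := by
    have key : ENNReal.ofReal (∫ x in Ω ∩ t, c * (f x) ^ 2 ∂volume)
        ≤ ∫⁻ x in Ω, W (M x) ∂volume := by
      rw [ofReal_integral_eq_lintegral_ofReal (hsqA.const_mul c)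
        (Filter.Eventually.of_forall fun x => by positivity)]
      calc ∫⁻ x in Ω ∩ t, ENNReal.ofReal (c * (f x) ^ 2) ∂volume
          ≤ ∫⁻ x in Ω ∩ t, W (M x) ∂volume :=
            setLIntegral_mono (hWmeas.comp hMmeas) (fun x hx => hW _ hx.2)
        _ ≤ ∫⁻ x in Ω, W (M x) ∂volume := lintegral_mono_set Set.inter_subset_left
    have := (ENNReal.ofReal_le_iff_le_toReal hWfin).mp key
    rwa [integral_const_mul] at this
  -- step (d): ∫_Ω f ≥ ∫_A f
  have hBnn : 0 ≤ ∫ x in Ω \ t, f x ∂volume := by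
    refine setIntegral_nonneg_of_ae_restrict ?_
    have hsub : ∀ᵐ x ∂(volume.restrict (Ω \ t)), 0 < (M x).det :=
      ae_restrict_of_ae_restrict_of_subset Set.diff_subset hdet
    filter_upwards [hsub, ae_restrict_mem (hΩmeas.diff htmeas)] with x hx1 hx2
    have hgt : 1 < |f x| := lt_of_not_ge hx2.2
    simp only [Pi.zero_apply]
    have hfx : f x = (M x).det - 1 := rfl
    rcases lt_abs.mp hgt with h' | h'
    · linarith
    · linarith
  have hsplit : (∫ x in Ω ∩ t, f x ∂volume) + ∫ x in Ω \ t, f x ∂volume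
      = ∫ x in Ω, f x ∂volume := integral_inter_add_diff htmeas hfint
  -- step (e): chain
  have hchain : h ^ α * π * ∫ x in Ω ∩ t, |f x| ∂volume
      ≤ (c / 2) * (∫ x in Ω ∩ t, (f x) ^ 2 ∂volume) + π ^ 2 / (2 * c) * h ^ (2 * α) * μΩ := by
    have e1 : h ^ α * π * ∫ x in Ω ∩ t, |f x| ∂volume
        = ∫ x in Ω ∩ t, h ^ α * π * |f x| ∂volume := (integral_const_mul _ _).symm
    have e2 : ∫ x in Ω ∩ t, h ^ α * π * |f x| ∂volume
        ≤ ∫ x in Ω ∩ t, ((c / 2) * (f x) ^ 2 + π ^ 2 / (2 * c) * h ^ (2 * α)) ∂volume := by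
      refine integral_mono (hfA.abs.const_mul _)
        ((hsqA.const_mul _).add (integrableOn_const
          (((measure_mono Set.inter_subset_left).trans_lt hΩfin).ne))) ?_
      intro x
      have key : h ^ α * π * |f x| ≤ c / 2 * |f x| ^ 2 + π ^ 2 / (2 * c) * h ^ (2 * α) := by
        have h2c : (0:ℝ) < 2 * c := by linarith
        have hcne : c ≠ 0 := hc.ne'
        have eq1 : ∀ y : ℝ, c / 2 * y ^ 2 + π ^ 2 / (2 * c) * (h ^ α * h ^ α)
            - h ^ α * π * y = (c * y - π * h ^ α) ^ 2 / (2 * c) := by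
          intro y; field_simp; ring
        rw [hp2]
        nlinarith [div_nonneg (sq_nonneg (c * |f x| - π * h ^ α)) h2c.le, eq1 |f x|]
      simpa [sq_abs] using key
    have e3 : ∫ x in Ω ∩ t, ((c / 2) * (f x) ^ 2 + π ^ 2 / (2 * c) * h ^ (2 * α)) ∂volume
        = (c / 2) * (∫ x in Ω ∩ t, (f x) ^ 2 ∂volume)
          + π ^ 2 / (2 * c) * h ^ (2 * α) * (volume (Ω ∩ t)).toReal := by
      rw [integral_add (hsqA.const_mul _) (integrableOn_const
          (((measure_mono Set.inter_subset_left).trans_lt hΩfin).ne)),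
        integral_const_mul, setIntegral_const, smul_eq_mul, measureReal_def]
      ring
    have e4 : (volume (Ω ∩ t)).toReal ≤ μΩ :=
      ENNReal.toReal_mono hΩfin.ne (measure_mono Set.inter_subset_left)
    rw [e1]
    refine e2.trans (e3.le.trans ?_)
    have : 0 ≤ π ^ 2 / (2 * c) * h ^ (2 * α) := by positivity
    nlinarith
  -- combine
  have habs : - ∫ x in Ω ∩ t, f x ∂volume ≤ ∫ x in Ω ∩ t, |f x| ∂volume := by
    have h1 := norm_integral_le_integral_norm (μ := volume.restrict (Ω ∩ t)) f
    simp only [Real.norm_eq_abs] at h1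
    have h2 := neg_abs_le (∫ x in Ω ∩ t, f x ∂volume)
    linarith
  have hEb : E ≤ C * h ^ (2 * α) + h ^ α * π * ∫ x in Ω ∩ t, |f x| ∂volume := by
    have hEn' : E + h ^ α * π * ((∫ x in Ω ∩ t, f x ∂volume) + ∫ x in Ω \ t, f x ∂volume)
        ≤ C * h ^ (2 * α) := by rw [hsplit]; exact hEn
    have h3 : 0 ≤ h ^ α * π * (∫ x in Ω \ t, f x ∂volume) := by positivity
    nlinarith [mul_le_mul_of_nonneg_left habs (by positivity : (0:ℝ) ≤ h ^ α * π)]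
  have hEK : E ≤ K * h ^ (2 * α) := by
    calc E ≤ 2 * (C * h ^ (2 * α)) + 2 * (π ^ 2 / (2 * c) * h ^ (2 * α) * μΩ) :=
          arith0 hc hEb hchain hcI2
      _ = K * h ^ (2 * α) := by rw [hKdef]; ring
  exact ⟨arith1 hc hK0 hp2pos hEK, arith2 hc hK0 hp2pos hEK hcI2⟩
end
end

section
/- Let Ω ⊆ ℝ³ be a measurable set of finite measure, let U be an open neighborhood of the identity matrix I in ℝ^{3×3}, and let W : U → ℝ be of class C² with W ≥ 0 and W(I) = 0 (so that the derivative of W at I vanishes). Let (G_h)_{h>0} be measurable maps G_h : Ω → ℝ^{3×3} with sup_h ess-sup_Ω |G_h| < ∞, converging as h → 0 to a map G in the sense that ess-sup_Ω |G_h − G| → 0. Then lim_{h→0} h^{−2} ∫_Ω W(I + h G_h(x)) dx = (1/2) ∫_Ω Q₃(G(x)) dx, where Q₃(F) := D²W(I)[F,F] is the second derivative of W at I applied twice to F. -/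
set_option maxHeartbeats 4000000

open MeasureTheory
open scoped ENNReal

noncomputable section

/-- We identify `ℝ^{3×3}` with the `Pi` type `Fin 3 → Fin 3 → ℝ`. -/
abbrev Mat3 : Type := Fin 3 → Fin 3 → ℝ

/-- The identity matrix. -/
def Id3 : Mat3 := fun i j => if i = j then 1 else 0

/-- The Frobenius norm on `ℝ^{3×3}`. -/
def frob3 (F : Mat3) : ℝ := Real.sqrt (∑ i, ∑ j, (F i j) ^ 2)

lemma norm_le_frob3 (F : Mat3) : ‖F‖ ≤ frob3 F := by
  have h0 : 0 ≤ frob3 F := Real.sqrt_nonneg _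
  rw [pi_norm_le_iff_of_nonneg h0]
  intro i
  rw [pi_norm_le_iff_of_nonneg h0]
  intro j
  have h1 : (F i j) ^ 2 ≤ ∑ i, ∑ j, (F i j) ^ 2 := by
    calc (F i j)^2 ≤ ∑ j', (F i j')^2 :=
          Finset.single_le_sum (fun k _ => sq_nonneg (F i k)) (Finset.mem_univ j)
      _ ≤ ∑ i', ∑ j', (F i' j')^2 :=
          Finset.single_le_sum (fun k _ => Finset.sum_nonneg fun l _ => sq_nonneg (F k l))
            (Finset.mem_univ i)
  calc ‖F i j‖ = Real.sqrt ((F i j)^2) := by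
        rw [Real.sqrt_sq_eq_abs]; rfl
    _ ≤ frob3 F := Real.sqrt_le_sqrt h1

lemma measurable_comp_of_continuousOn {α : Type*} [MeasurableSpace α] {φ : α → Mat3}
    {W : Mat3 → ℝ} {U : Set Mat3} (hU : IsOpen U) (hW : ContinuousOn W U)
    (hφ : Measurable φ) (hr : ∀ x, φ x ∈ U) : Measurable fun x => W (φ x) := by
  apply measurable_of_isOpen
  intro V hV
  have : (fun x => W (φ x)) ⁻¹' V = φ ⁻¹' (U ∩ W ⁻¹' V) := by
    ext x; simp [hr x]
  rw [this]
  exact hφ (hW.isOpen_inter_preimage hU hV).measurableSet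

/-- Quadratic expansion of the elastic energy: if `W` is `C²` on a neighborhood `U` of the
identity, nonnegative and vanishing at the identity, and `G_h → G` in `L^∞(Ω)` with a uniform
`L^∞` bound, then `h⁻² ∫_Ω W(I + h G_h) → (1/2) ∫_Ω Q₃(G)` as `h → 0⁺`, where
`Q₃(F) = D²W(I)[F,F]`. -/
theorem stmt16 (Ω : Set (Fin 3 → ℝ)) (hΩmeas : MeasurableSet Ω) (hΩfin : volume Ω < ⊤)
    (U : Set Mat3) (hUopen : IsOpen U) (hIU : Id3 ∈ U)
    (W : Mat3 → ℝ) (hWC2 : ContDiffOn ℝ 2 W U)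
    (hWnonneg : ∀ F ∈ U, 0 ≤ W F) (hWI : W Id3 = 0)
    (G : ℝ → (Fin 3 → ℝ) → Mat3) (Glim : (Fin 3 → ℝ) → Mat3)
    (hGmeas : ∀ h : ℝ, 0 < h → Measurable (G h))
    (hGbdd : ∃ K : ℝ, ∀ h : ℝ, 0 < h →
      ∀ᵐ x ∂(volume.restrict Ω), frob3 (G h x) ≤ K)
    (hGconv : ∀ ε : ℝ, 0 < ε → ∃ δ : ℝ, 0 < δ ∧ ∀ h : ℝ, 0 < h → h < δ →
      ∀ᵐ x ∂(volume.restrict Ω), frob3 (G h x - Glim x) ≤ ε) :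
    Filter.Tendsto
      (fun h : ℝ => (h ^ 2)⁻¹ * ∫ x in Ω, W (Id3 + h • G h x) ∂volume)
      (nhdsWithin 0 (Set.Ioi 0))
      (nhds ((1 / 2) *
        ∫ x in Ω, (iteratedFDerivWithin ℝ 2 W U Id3) ![Glim x, Glim x] ∂volume)) := by
  classical
  haveI : Fact (volume Ω < ⊤) := ⟨hΩfin⟩
  -- derivatives
  set f' := fderiv ℝ W with hf'def
  set B2 := fderiv ℝ f' with hB2def
  set B := B2 Id3 with hBdef
  have e12 : (2 : WithTop ℕ∞) = 1 + 1 := by norm_num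
  obtain ⟨hWdiff, -, hC1⟩ := (contDiffOn_succ_iff_fderiv_of_isOpen hUopen).mp (e12 ▸ hWC2)
  have e01 : (1 : WithTop ℕ∞) = 0 + 1 := by norm_num
  obtain ⟨hf'diff, -, hC0⟩ := (contDiffOn_succ_iff_fderiv_of_isOpen hUopen).mp (e01 ▸ hC1)
  have hBcont : ContinuousOn B2 U := contDiffOn_zero.mp hC0
  have hdW : ∀ y ∈ U, HasFDerivAt W (f' y) y := fun y hy =>
    ((hWdiff y hy).differentiableAt (hUopen.mem_nhds hy)).hasFDerivAt
  have hdf' : ∀ y ∈ U, HasFDerivAt f' (B2 y) y := fun y hy =>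
    ((hf'diff y hy).differentiableAt (hUopen.mem_nhds hy)).hasFDerivAt
  have hf'I : f' Id3 = 0 := by
    have hmin : IsLocalMin W Id3 := by
      have : ∀ᶠ y in nhds Id3, W Id3 ≤ W y := by
        filter_upwards [hUopen.mem_nhds hIU] with y hy
        rw [hWI]; exact hWnonneg y hy
      exact this
    exact hmin.fderiv_eq_zero
  -- the second iterated derivative is B
  have hQ : ∀ a : Mat3, (iteratedFDerivWithin ℝ 2 W U Id3) ![a, a] = B a a := by
    intro a
    rw [iteratedFDerivWithin_two_apply W hUopen.uniqueDiffOn hIU]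
    have h1 : fderivWithin ℝ (fderivWithin ℝ W U) U Id3 = fderiv ℝ (fderivWithin ℝ W U) Id3 :=
      fderivWithin_of_isOpen hUopen hIU
    have h2 : fderiv ℝ (fderivWithin ℝ W U) Id3 = B2 Id3 := by
      apply Filter.EventuallyEq.fderiv_eq
      filter_upwards [hUopen.mem_nhds hIU] with y hy
      exact fderivWithin_of_isOpen hUopen hy
    rw [h1, h2]
    simp [hBdef]
  -- uniform second-order Taylor expansion
  have key : ∀ ε : ℝ, 0 < ε → ∃ δ : ℝ, 0 < δ ∧ Metric.ball Id3 δ ⊆ U ∧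
      ∀ A : Mat3, ‖A‖ < δ → |W (Id3 + A) - 1/2 * (B A A)| ≤ ε * ‖A‖^2 := by
    intro ε hε
    have hcontAt : ContinuousAt B2 Id3 := hBcont.continuousAt (hUopen.mem_nhds hIU)
    obtain ⟨δ₀, hδ₀, hB2close⟩ := (@Metric.continuousAt_iff Mat3 (Mat3 →L[ℝ] Mat3 →L[ℝ] ℝ) _ _ B2 Id3).mp hcontAt ε hε
    obtain ⟨δu, hδu, hball⟩ := Metric.isOpen_iff.mp hUopen Id3 hIU
    refine ⟨min δ₀ δu, lt_min hδ₀ hδu, ?_, ?_⟩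
    · exact (Metric.ball_subset_ball (min_le_right _ _)).trans hball
    intro A hA
    set s := Metric.ball Id3 (min δ₀ δu) with hsdef
    have hsU : s ⊆ U := (Metric.ball_subset_ball (min_le_right _ _)).trans hball
    -- first-order Taylor for f'
    have hsub : ∀ y ∈ s, ‖(f' y - B y) - (f' Id3 - B Id3)‖ ≤ ε * ‖y - Id3‖ := by
      intro y hy
      exact Convex.norm_image_sub_le_of_norm_hasFDerivWithin_le
        (f := fun z => f' z - B z) (f' := fun z => B2 z - B) (s := s) (C := ε)
        (fun z hz => (((hdf' z (hsU hz)).sub (B.hasFDerivAt)).hasFDerivWithinAt))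
        (fun z hz => by
          have hd : dist z Id3 < δ₀ := lt_of_lt_of_le (Metric.mem_ball.mp hz) (min_le_left _ _)
          have := (hB2close hd).le
          exact (dist_eq_norm (B2 z) (B2 Id3)).symm.trans_le this)
        (convex_ball _ _) (Metric.mem_ball_self (lt_min hδ₀ hδu)) hy
    have hmem : ∀ t : ℝ, t ∈ Set.Icc (0:ℝ) 1 → Id3 + t • A ∈ s := by
      intro t ht
      rw [hsdef, Metric.mem_ball, dist_eq_norm, add_sub_cancel_left, norm_smul,
        Real.norm_eq_abs, abs_of_nonneg ht.1]
      calc t * ‖A‖ ≤ 1 * ‖A‖ := by nlinarith [ht.2, norm_nonneg A]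
        _ < min δ₀ δu := by rwa [one_mul]
    have hest : ∀ t : ℝ, t ∈ Set.Icc (0:ℝ) 1 →
        ‖f' (Id3 + t • A) - B (t • A)‖ ≤ ε * ‖A‖ := by
      intro t ht
      have h1 := hsub (Id3 + t • A) (hmem t ht)
      rw [hf'I] at h1
      have h2 : (f' (Id3 + t • A) - B (Id3 + t • A)) - (0 - B Id3)
          = f' (Id3 + t • A) - B (t • A) := by
        rw [zero_sub, sub_neg_eq_add, map_add]
        abel
      rw [h2, add_sub_cancel_left, norm_smul, Real.norm_eq_abs, abs_of_nonneg ht.1] at h1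
      calc ‖f' (Id3 + t • A) - B (t • A)‖ ≤ ε * (t * ‖A‖) := h1
        _ ≤ ε * ‖A‖ := by
            nlinarith [ht.2, ht.1, norm_nonneg A, hε.le,
              mul_nonneg (mul_nonneg hε.le (sub_nonneg.mpr ht.2)) (norm_nonneg A)]
    -- 1-D integration of the estimate
    set Q : ℝ := B A A with hQdef
    set φ : ℝ → ℝ := fun t => W (Id3 + t • A) - t^2/2 * Q with hφdef
    set ψ : ℝ → ℝ := fun t => f' (Id3 + t • A) A - t * Q with hψdef
    have hφ' : ∀ t ∈ Set.Icc (0:ℝ) 1, HasDerivWithinAt φ (ψ t) (Set.Icc (0:ℝ) 1) t := by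
      intro t ht
      have hc : HasDerivAt (fun t : ℝ => Id3 + t • A) A t := by
        simpa using ((hasDerivAt_id t).smul_const A).const_add Id3
      have hW1 : HasDerivAt (fun t : ℝ => W (Id3 + t • A)) (f' (Id3 + t • A) A) t :=
        (hdW _ (hsU (hmem t ht))).comp_hasDerivAt t hc
      have hW2 : HasDerivAt (fun t : ℝ => t^2/2 * Q) (t * Q) t := by
        have := ((hasDerivAt_pow 2 t).div_const 2).mul_const Q
        convert this using 1
        · rfl
        · rfl
        push_cast
        norm_num
      exact (hW1.sub hW2).hasDerivWithinAt
    have hψb : ∀ t ∈ Set.Icc (0:ℝ) 1, ‖ψ t‖ ≤ ε * ‖A‖^2 := by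
      intro t ht
      have h3 : (B (t • A)) A = t * (B A) A := by
        rw [_root_.map_smul B t A, ContinuousLinearMap.smul_apply, smul_eq_mul]
      have h4 : ψ t = (f' (Id3 + t • A) - B (t • A)) A := by
        simp only [hψdef, ContinuousLinearMap.sub_apply, h3, hQdef]
      rw [h4]
      calc ‖(f' (Id3 + t • A) - B (t • A)) A‖
          ≤ ‖f' (Id3 + t • A) - B (t • A)‖ * ‖A‖ := ContinuousLinearMap.le_opNorm _ _
        _ ≤ (ε * ‖A‖) * ‖A‖ := by
            have := hest t ht
            nlinarith [norm_nonneg A, norm_nonneg (f' (Id3 + t • A) - B (t • A))]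
        _ = ε * ‖A‖^2 := by ring
    have hfinal := Convex.norm_image_sub_le_of_norm_hasDerivWithin_le (𝕜 := ℝ)
      hφ' hψb (convex_Icc 0 1) (Set.left_mem_Icc.mpr zero_le_one)
      (Set.right_mem_Icc.mpr zero_le_one)
    have hφ1 : φ 1 = W (Id3 + A) - 1/2 * Q := by
      rw [hφdef]; norm_num
    have hφ0 : φ 0 = 0 := by
      rw [hφdef]; simp [hWI]
    rw [hφ1, hφ0, sub_zero] at hfinal
    simpa using hfinal

  -- convert hypotheses to norm form
  obtain ⟨K₀, hK₀⟩ := hGbdd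
  set K := max K₀ 0 with hKdef
  have hK : 0 ≤ K := le_max_right _ _
  have hGK : ∀ h : ℝ, 0 < h → ∀ᵐ x ∂(volume.restrict Ω), ‖G h x‖ ≤ K := by
    intro h hh
    filter_upwards [hK₀ h hh] with x hx
    exact (norm_le_frob3 _).trans (hx.trans (le_max_left _ _))
  have hconv' : ∀ ε : ℝ, 0 < ε → ∃ δ : ℝ, 0 < δ ∧ ∀ h : ℝ, 0 < h → h < δ →
      ∀ᵐ x ∂(volume.restrict Ω), ‖G h x - Glim x‖ ≤ ε := by
    intro ε hε
    obtain ⟨δ, hδ, hd⟩ := hGconv ε hε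
    exact ⟨δ, hδ, fun h h1 h2 => by
      filter_upwards [hd h h1 h2] with x hx
      exact (norm_le_frob3 _).trans hx⟩
  -- Glim is a.e. measurable and a.e. bounded
  have hseq : ∀ n : ℕ, ∃ t : ℝ, 0 < t ∧
      ∀ᵐ x ∂(volume.restrict Ω), ‖G t x - Glim x‖ ≤ 1/((n:ℝ)+1) := by
    intro n
    obtain ⟨δ, hδ, hd⟩ := hconv' (1/((n:ℝ)+1)) (by positivity)
    exact ⟨δ/2, by positivity, hd (δ/2) (by positivity) (by linarith)⟩
  choose t ht1 ht2 using hseq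
  have hGlimae : AEMeasurable Glim (volume.restrict Ω) := by
    apply aemeasurable_of_tendsto_metrizable_ae Filter.atTop
      (fun n => (hGmeas (t n) (ht1 n)).aemeasurable)
    have haet : ∀ᵐ x ∂(volume.restrict Ω), ∀ n : ℕ, ‖G (t n) x - Glim x‖ ≤ 1/((n:ℝ)+1) :=
      (MeasureTheory.ae_all_iff).mpr ht2
    filter_upwards [haet] with x hx
    rw [tendsto_iff_dist_tendsto_zero]
    refine squeeze_zero (fun n => dist_nonneg) ?_ tendsto_one_div_add_atTop_nhds_zero_nat
    intro n
    rw [dist_eq_norm]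
    exact hx n
  have hGlimbdd : ∀ᵐ x ∂(volume.restrict Ω), ‖Glim x‖ ≤ K + 1 := by
    filter_upwards [ht2 0, hGK (t 0) (ht1 0)] with x h1 h2
    have h1' : ‖G (t 0) x - Glim x‖ ≤ 1 := by simpa using h1
    have h3 : Glim x = G (t 0) x - (G (t 0) x - Glim x) := by abel
    calc ‖Glim x‖ = ‖G (t 0) x - (G (t 0) x - Glim x)‖ := by rw [← h3]
      _ ≤ ‖G (t 0) x‖ + ‖G (t 0) x - Glim x‖ := norm_sub_le _ _
      _ ≤ K + 1 := add_le_add h2 h1'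
  set M := ‖B‖ with hMdef
  have hM : 0 ≤ M := by rw [hMdef]; exact norm_nonneg B
  have hcontBB : Continuous fun y : Mat3 => B y y := by fun_prop
  set V := (volume Ω).toReal with hVdef
  have hV : 0 ≤ V := ENNReal.toReal_nonneg
  have hintQlim : Integrable (fun x => B (Glim x) (Glim x)) (volume.restrict Ω) := by
    apply Integrable.mono' (integrable_const (M * (K+1) * (K+1)))
    · exact ((hcontBB.measurable).comp_aemeasurable hGlimae).aestronglyMeasurable
    · filter_upwards [hGlimbdd] with x hx
      calc ‖B (Glim x) (Glim x)‖ ≤ M * ‖Glim x‖ * ‖Glim x‖ := B.le_opNorm₂ _ _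
        _ ≤ M * (K+1) * (K+1) := by
            have q1 : ‖Glim x‖ * ‖Glim x‖ ≤ (K+1) * (K+1) :=
              mul_le_mul hx hx (norm_nonneg _) (by linarith)
            nlinarith [mul_le_mul_of_nonneg_left q1 hM]
  -- rewrite the target integrand
  have hrw : ∫ x in Ω, (iteratedFDerivWithin ℝ 2 W U Id3) ![Glim x, Glim x] ∂volume
      = ∫ x in Ω, B (Glim x) (Glim x) ∂volume :=
    integral_congr_ae (Filter.Eventually.of_forall fun x => hQ (Glim x))
  rw [hrw]
  rw [Metric.tendsto_nhdsWithin_nhds]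
  intro ε hε
  set ε₁ := ε / (4*(K^2*V+1)) with hε₁def
  have hε₁pos : 0 < ε₁ := by positivity
  obtain ⟨δ₁, hδ₁pos, hballU, hTaylor⟩ := key ε₁ hε₁pos
  set ε₂ := min 1 (ε / (4*(M*(2*K+1)*V+1))) with hε₂def
  have hε₂pos : 0 < ε₂ := lt_min one_pos (by positivity)
  have hε₂le1 : ε₂ ≤ 1 := min_le_left _ _
  have hε₂le : ε₂ ≤ ε / (4*(M*(2*K+1)*V+1)) := min_le_right _ _
  obtain ⟨δ₂, hδ₂pos, hclose⟩ := hconv' ε₂ hε₂pos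
  refine ⟨min (δ₁/(K+1)) δ₂, by positivity, ?_⟩
  intro h hmem hd
  have hpos : 0 < h := hmem
  rw [Real.dist_eq, sub_zero, abs_of_pos hpos] at hd
  have hlt1 : h < δ₁/(K+1) := lt_of_lt_of_le hd (min_le_left _ _)
  have hlt2 : h < δ₂ := lt_of_lt_of_le hd (min_le_right _ _)
  have hhK : h * K < δ₁ := by
    have h1 : h * (K+1) < δ₁ := (lt_div_iff₀ (by positivity)).mp hlt1
    have h2 : h * K + h = h * (K+1) := by ring
    linarith
  have hae1 := hGK h hpos
  have hae2 := hclose h hpos hlt2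
  -- pointwise a.e. estimates
  have claimA : ∀ᵐ x ∂(volume.restrict Ω),
      |W (Id3 + h • G h x) - h^2/2 * (B (G h x) (G h x))| ≤ ε₁ * (h^2 * K^2) := by
    filter_upwards [hae1] with x hx
    have hAn : ‖h • G h x‖ = h * ‖G h x‖ := by
      rw [norm_smul, Real.norm_eq_abs, abs_of_pos hpos]
    have hAδ : ‖h • G h x‖ < δ₁ := by
      rw [hAn]
      calc h * ‖G h x‖ ≤ h * K := mul_le_mul_of_nonneg_left hx hpos.le
        _ < δ₁ := hhK
    have hT := hTaylor (h • G h x) hAδ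
    have hBsm : B (h • G h x) (h • G h x) = h^2 * (B (G h x) (G h x)) := by
      rw [_root_.map_smul B h (G h x), ContinuousLinearMap.smul_apply,
        ContinuousLinearMap.map_smul, smul_eq_mul, smul_eq_mul]
      ring
    have hA2 : ‖h • G h x‖^2 ≤ h^2 * K^2 := by
      rw [hAn]
      have q1 : ‖G h x‖ * ‖G h x‖ ≤ K * K := mul_le_mul hx hx (norm_nonneg _) hK
      nlinarith [mul_le_mul_of_nonneg_left q1 (sq_nonneg h)]
    have he : h^2/2 * (B (G h x) (G h x)) = 1/2 * (B (h • G h x) (h • G h x)) := by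
      rw [hBsm]; ring
    rw [he]
    calc |W (Id3 + h • G h x) - 1/2 * (B (h • G h x) (h • G h x))|
        ≤ ε₁ * ‖h • G h x‖^2 := hT
      _ ≤ ε₁ * (h^2*K^2) := mul_le_mul_of_nonneg_left hA2 hε₁pos.le
  have claimB : ∀ᵐ x ∂(volume.restrict Ω),
      |B (G h x) (G h x) - B (Glim x) (Glim x)| ≤ M * ε₂ * (2*K+1) := by
    filter_upwards [hae1, hae2] with x h1 h2
    have hb : ‖Glim x‖ ≤ K + 1 := by
      have h3 : Glim x = G h x - (G h x - Glim x) := by abel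
      calc ‖Glim x‖ = ‖G h x - (G h x - Glim x)‖ := by rw [← h3]
        _ ≤ ‖G h x‖ + ‖G h x - Glim x‖ := norm_sub_le _ _
        _ ≤ K + 1 := add_le_add h1 (h2.trans hε₂le1)
    have hid : B (G h x) (G h x) - B (Glim x) (Glim x)
        = B (G h x - Glim x) (G h x) + B (Glim x) (G h x - Glim x) := by
      simp only [_root_.map_sub, ContinuousLinearMap.sub_apply,
        ContinuousLinearMap.map_sub]
      ring
    rw [hid]
    have p1 : ‖G h x - Glim x‖ * ‖G h x‖ ≤ ε₂ * K :=
      mul_le_mul h2 h1 (norm_nonneg _) hε₂pos.le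
    have p2 : ‖Glim x‖ * ‖G h x - Glim x‖ ≤ (K+1) * ε₂ :=
      mul_le_mul hb h2 (norm_nonneg _) (by positivity)
    calc |B (G h x - Glim x) (G h x) + B (Glim x) (G h x - Glim x)|
        ≤ |B (G h x - Glim x) (G h x)| + |B (Glim x) (G h x - Glim x)| := abs_add_le _ _
      _ ≤ M * ‖G h x - Glim x‖ * ‖G h x‖ + M * ‖Glim x‖ * ‖G h x - Glim x‖ :=
          add_le_add (B.le_opNorm₂ _ _) (B.le_opNorm₂ _ _)
      _ ≤ M * ε₂ * (2*K+1) := by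
          nlinarith [mul_le_mul_of_nonneg_left p1 hM, mul_le_mul_of_nonneg_left p2 hM]
  -- integrability
  have hintQh : Integrable (fun x => B (G h x) (G h x)) (volume.restrict Ω) := by
    apply Integrable.mono' (integrable_const (M * K * K))
    · exact ((hcontBB.measurable).comp (hGmeas h hpos)).aestronglyMeasurable
    · filter_upwards [hae1] with x hx
      calc ‖B (G h x) (G h x)‖ ≤ M * ‖G h x‖ * ‖G h x‖ := B.le_opNorm₂ _ _
        _ ≤ M * K * K := by
            have q1 : ‖G h x‖ * ‖G h x‖ ≤ K * K := mul_le_mul hx hx (norm_nonneg _) hK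
            nlinarith [mul_le_mul_of_nonneg_left q1 hM]
  have hintW : Integrable (fun x => W (Id3 + h • G h x)) (volume.restrict Ω) := by
    set φm : (Fin 3 → ℝ) → Mat3 :=
      fun x => if ‖h • G h x‖ < δ₁ then Id3 + h • G h x else Id3 with hφm
    have hφmeas : Measurable φm := by
      apply Measurable.ite
      · exact measurableSet_lt (((hGmeas h hpos).const_smul h).norm) measurable_const
      · exact measurable_const.add ((hGmeas h hpos).const_smul h)
      · exact measurable_const
    have hφU : ∀ x, φm x ∈ U := by
      intro x
      by_cases hc : ‖h • G h x‖ < δ₁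
      · simp only [hφm, if_pos hc]
        apply hballU
        rw [Metric.mem_ball, dist_eq_norm, add_sub_cancel_left]
        exact hc
      · simp only [hφm, if_neg hc]; exact hIU
    have hWφ := measurable_comp_of_continuousOn hUopen hWC2.continuousOn hφmeas hφU
    have haeeq : (fun x => W (Id3 + h • G h x)) =ᵐ[volume.restrict Ω]
        fun x => W (φm x) := by
      filter_upwards [hae1] with x hx
      have hAδ : ‖h • G h x‖ < δ₁ := by
        rw [norm_smul, Real.norm_eq_abs, abs_of_pos hpos]
        calc h * ‖G h x‖ ≤ h * K := mul_le_mul_of_nonneg_left hx hpos.le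
          _ < δ₁ := hhK
      simp only [hφm, if_pos hAδ]
    apply Integrable.mono' (integrable_const (ε₁ * (h^2*K^2) + h^2/2 * (M*K*K)))
    · exact (hWφ.aestronglyMeasurable).congr haeeq.symm
    · filter_upwards [claimA, hae1] with x hA hx
      have hBb : |B (G h x) (G h x)| ≤ M*K*K := by
        calc |B (G h x) (G h x)| ≤ M * ‖G h x‖ * ‖G h x‖ := B.le_opNorm₂ _ _
          _ ≤ M*K*K := by
              have q1 : ‖G h x‖ * ‖G h x‖ ≤ K * K := mul_le_mul hx hx (norm_nonneg _) hK
              nlinarith [mul_le_mul_of_nonneg_left q1 hM]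
      have h7 : |W (Id3 + h • G h x)|
          ≤ |W (Id3 + h • G h x) - h^2/2 * (B (G h x) (G h x))|
            + |h^2/2 * (B (G h x) (G h x))| := by
        calc |W (Id3 + h • G h x)|
            = |(W (Id3 + h • G h x) - h^2/2 * (B (G h x) (G h x)))
                + h^2/2 * (B (G h x) (G h x))| := by ring_nf
          _ ≤ _ := abs_add_le _ _
      have h8 : |h^2/2 * (B (G h x) (G h x))| ≤ h^2/2 * (M*K*K) := by
        rw [abs_mul, abs_of_nonneg (by positivity : (0:ℝ) ≤ h^2/2)]
        exact mul_le_mul_of_nonneg_left hBb (by positivity)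
      have h9 : ‖W (Id3 + h • G h x)‖ = |W (Id3 + h • G h x)| := rfl
      rw [h9]
      linarith
  -- integral estimates
  set I1 := ∫ x in Ω, W (Id3 + h • G h x) ∂volume with hI1
  set I2 := ∫ x in Ω, B (G h x) (G h x) ∂volume with hI2
  set I3 := ∫ x in Ω, B (Glim x) (Glim x) ∂volume with hI3
  have bound1 : |I1 - h^2/2 * I2| ≤ ε₁ * (h^2*K^2) * V := by
    have e1 : I1 - h^2/2 * I2
        = ∫ x in Ω, (W (Id3 + h • G h x) - h^2/2 * (B (G h x) (G h x))) ∂volume := by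
      rw [hI1, hI2, ← integral_const_mul, ← integral_sub hintW (hintQh.const_mul _)]
    rw [e1, ← Real.norm_eq_abs]
    apply norm_setIntegral_le_of_norm_le_const_ae hΩfin
    filter_upwards [claimA] with x hx
    rwa [Real.norm_eq_abs]
  have bound2 : |I2 - I3| ≤ M * ε₂ * (2*K+1) * V := by
    have e2 : I2 - I3
        = ∫ x in Ω, (B (G h x) (G h x) - B (Glim x) (Glim x)) ∂volume :=
      (integral_sub hintQh hintQlim).symm
    rw [e2, ← Real.norm_eq_abs]
    apply norm_setIntegral_le_of_norm_le_const_ae hΩfin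
    filter_upwards [claimB] with x hx
    rwa [Real.norm_eq_abs]
  -- final arithmetic
  show dist ((h^2)⁻¹ * I1) (1/2 * I3) < ε
  rw [Real.dist_eq]
  have hterm1 : |(h^2)⁻¹ * I1 - 1/2 * I2| ≤ ε₁ * (K^2*V) := by
    have hne : (h:ℝ)^2 ≠ 0 := by positivity
    have e3 : (h^2)⁻¹ * I1 - 1/2 * I2 = (h^2)⁻¹ * (I1 - h^2/2 * I2) := by
      field_simp
    rw [e3, abs_mul, abs_of_nonneg (by positivity : (0:ℝ) ≤ (h^2)⁻¹)]
    calc (h^2)⁻¹ * |I1 - h^2/2*I2| ≤ (h^2)⁻¹ * (ε₁*(h^2*K^2)*V) :=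
          mul_le_mul_of_nonneg_left bound1 (by positivity)
      _ = ε₁*(K^2*V) := by field_simp
  have harith1 : ε₁ * (K^2*V) ≤ ε/4 := by
    have hd1 : ε₁ * (K^2*V) ≤ ε₁ * (K^2*V+1) := by nlinarith [hε₁pos.le]
    have hne1 : (K^2*V+1) ≠ 0 := by positivity
    have e5 : ε₁ * (K^2*V+1) = ε/4 := by
      rw [hε₁def]
      field_simp
    linarith
  have harith2 : M * ε₂ * (2*K+1) * V / 2 ≤ ε/4 := by
    have hc : 0 ≤ M*(2*K+1)*V := by positivity
    have h5 : M * ε₂ * (2*K+1) * V ≤ (M*(2*K+1)*V) * (ε / (4*(M*(2*K+1)*V+1))) := by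
      calc M * ε₂ * (2*K+1) * V = (M*(2*K+1)*V) * ε₂ := by ring
        _ ≤ _ := mul_le_mul_of_nonneg_left hε₂le hc
    have h6 : (M*(2*K+1)*V) * (ε / (4*(M*(2*K+1)*V+1))) ≤ ε/4 := by
      have hd2 : (M*(2*K+1)*V) * (ε / (4*(M*(2*K+1)*V+1)))
          ≤ (M*(2*K+1)*V+1) * (ε / (4*(M*(2*K+1)*V+1))) := by
        have : (0:ℝ) ≤ ε / (4*(M*(2*K+1)*V+1)) := by positivity
        nlinarith
      have hne2 : (M*(2*K+1)*V+1) ≠ 0 := by positivity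
      have e6 : (M*(2*K+1)*V+1) * (ε / (4*(M*(2*K+1)*V+1))) = ε/4 := by
        field_simp
      linarith
    linarith
  have hsplit : |(h^2)⁻¹ * I1 - 1/2 * I3|
      ≤ |(h^2)⁻¹ * I1 - 1/2 * I2| + 1/2 * |I2 - I3| := by
    have e4 : (h^2)⁻¹*I1 - 1/2*I3 = ((h^2)⁻¹*I1 - 1/2*I2) + (1/2*(I2 - I3)) := by ring
    rw [e4]
    calc |((h^2)⁻¹*I1 - 1/2*I2) + (1/2*(I2 - I3))|
        ≤ |(h^2)⁻¹*I1 - 1/2*I2| + |1/2*(I2 - I3)| := abs_add_le _ _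
      _ = |(h^2)⁻¹*I1 - 1/2*I2| + 1/2 * |I2 - I3| := by
          rw [abs_mul, abs_of_nonneg (by norm_num : (0:ℝ) ≤ 1/2)]
  calc |(h^2)⁻¹ * I1 - 1/2 * I3|
      ≤ |(h^2)⁻¹ * I1 - 1/2 * I2| + 1/2 * |I2 - I3| := hsplit
    _ ≤ ε₁ * (K^2*V) + 1/2 * (M * ε₂ * (2*K+1) * V) := by
        have := mul_le_mul_of_nonneg_left bound2 (by norm_num : (0:ℝ) ≤ 1/2)
        linarith
    _ ≤ ε/4 + ε/4 := by linarith
    _ < ε := by linarith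
end
end
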